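/- Suppose the step sizes η_t are positive (otherwise arbitrary) and the initial threshold satisfies q_1 ∈ [0,B]. Define Δ_1 = 1/η_1 and Δ_t = 1/η_t − 1/η_{t−1} for t ≥ 2. Then for every T ≥ 1, | (1/T)·Σ_{t=1}^T 1{s_t ≤ q_t} − (1−α) | ≤ ((B + max_{1≤t≤T} η_t)/T) · Σ_{t=1}^T |Δ_t|. -/

import Mathlib

/-- **Online conformal prediction with arbitrary positive step sizes: long-run coverage.**
Fix `α ∈ (0,1)` and `B > 0`. Scores `s t ∈ [0,B]`, arbitrary positive step sizes `η t`,
initial threshold `q 1 ∈ [0,B]`, and the online conformal update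
`q (t+1) = q t + η t * (err t - α)` where `err t = 1` if `s t > q t` and `0` otherwise.
With `Δ 1 = 1/η 1` and `Δ t = 1/η t - 1/η (t-1)` for `t ≥ 2`, for every `T ≥ 1`,
`|(1/T) ∑_{t=1}^T 1{s t ≤ q t} - (1-α)| ≤ ((B + max_{1≤t≤T} η t)/T) * ∑_{t=1}^T |Δ t|`. -/
theorem long_run_coverage_arbitrary_step
    (α B : ℝ) (hα : α ∈ Set.Ioo (0 : ℝ) 1) (hB : 0 < B)
    (s η q Δ : ℕ → ℝ)
    (hs : ∀ t, 1 ≤ t → s t ∈ Set.Icc 0 B)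
    (hη_pos : ∀ t, 1 ≤ t → 0 < η t)
    (hq1 : q 1 ∈ Set.Icc 0 B)
    (hrec : ∀ t, 1 ≤ t →
      q (t + 1) = q t + η t * ((if q t < s t then (1 : ℝ) else 0) - α))
    (hΔ1 : Δ 1 = 1 / η 1)
    (hΔ : ∀ t, 2 ≤ t → Δ t = 1 / η t - 1 / η (t - 1))
    (T : ℕ) (hT : 1 ≤ T) :
    |(1 / (T : ℝ)) * ∑ t ∈ Finset.Icc 1 T, (if s t ≤ q t then (1 : ℝ) else 0) - (1 - α)|
      ≤ ((B + (Finset.Icc 1 T).sup' (Finset.nonempty_Icc.mpr hT) η) / T)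
          * ∑ t ∈ Finset.Icc 1 T, |Δ t| := by
  obtain ⟨hα0, hα1⟩ := hα
  set M := (Finset.Icc 1 T).sup' (Finset.nonempty_Icc.mpr hT) η with hMdef
  have hMη : ∀ t, 1 ≤ t → t ≤ T → η t ≤ M := fun t h1 h2 =>
    Finset.le_sup' η (Finset.mem_Icc.mpr ⟨h1, h2⟩)
  have hMpos : 0 < M := lt_of_lt_of_le (hη_pos 1 le_rfl) (hMη 1 le_rfl hT)
  -- bounds on the thresholds
  have hqb : ∀ t, 1 ≤ t → t ≤ T + 1 → -(M * α) ≤ q t ∧ q t ≤ B + M * (1 - α) := by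
    intro t ht
    induction t, ht using Nat.le_induction with
    | base =>
      intro _
      obtain ⟨h0, hB'⟩ := hq1
      constructor
      · nlinarith [mul_pos hMpos hα0]
      · nlinarith [mul_pos hMpos (sub_pos.mpr hα1)]
    | succ n hn ih =>
      intro hle
      have hnT : n ≤ T := by omega
      obtain ⟨il, iu⟩ := ih (by omega)
      have hη := hη_pos n hn
      have hηM := hMη n hn hnT
      obtain ⟨hs0, hsB⟩ := hs n hn
      rw [hrec n hn]
      by_cases h : q n < s n
      · rw [if_pos h]
        constructor
        · nlinarith [mul_pos hη (sub_pos.mpr hα1)]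
        · nlinarith [mul_pos hη (sub_pos.mpr hα1), mul_pos hMpos (sub_pos.mpr hα1)]
      · rw [if_neg h]
        push_neg at h
        constructor
        · nlinarith [mul_pos hη hα0, mul_pos hMpos hα0]
        · nlinarith [mul_pos hη hα0]
  -- partial sums of Δ
  have sumΔ : ∀ t, 1 ≤ t → ∑ u ∈ Finset.Icc 1 t, Δ u = 1 / η t := by
    intro t ht
    induction t, ht using Nat.le_induction with
    | base => simp [hΔ1]
    | succ n hn ih =>
      rw [Finset.sum_Icc_succ_top (by omega : 1 ≤ n + 1), ih, hΔ (n + 1) (by omega)]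
      simp only [Nat.add_sub_cancel]
      ring
  -- the key Abel-type identity
  have keyid : ∀ T', 1 ≤ T' →
      ∑ t ∈ Finset.Icc 1 T', ((if q t < s t then (1 : ℝ) else 0) - α)
        = ∑ u ∈ Finset.Icc 1 T', Δ u * (q (T' + 1) - q u) := by
    intro T' hT'
    induction T', hT' using Nat.le_induction with
    | base =>
      simp only [Finset.Icc_self, Finset.sum_singleton]
      have hη := (hη_pos 1 le_rfl).ne'
      rw [hrec 1 le_rfl, hΔ1]
      field_simp
      ring
    | succ n hn ih =>
      have hη := (hη_pos (n + 1) (by omega)).ne'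
      have key : ((if q (n + 1) < s (n + 1) then (1 : ℝ) else 0) - α)
          = (q (n + 1 + 1) - q (n + 1)) * (1 / η (n + 1)) := by
        rw [hrec (n + 1) (by omega)]
        field_simp
        ring
      rw [Finset.sum_Icc_succ_top (by omega : 1 ≤ n + 1),
          Finset.sum_Icc_succ_top (by omega : 1 ≤ n + 1), ih]
      have expand : ∑ u ∈ Finset.Icc 1 n, Δ u * (q (n + 1 + 1) - q u)
          = ∑ u ∈ Finset.Icc 1 n, (Δ u * (q (n + 1) - q u)
              + Δ u * (q (n + 1 + 1) - q (n + 1))) := by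
        apply Finset.sum_congr rfl
        intro u _
        ring
      rw [expand, Finset.sum_add_distrib, ← Finset.sum_mul, sumΔ n hn,
        hΔ (n + 1) (by omega)]
      simp only [Nat.add_sub_cancel]
      linear_combination key
  have hcard : (Finset.Icc 1 T).card = T := by rw [Nat.card_Icc]; omega
  have hcov : ∑ t ∈ Finset.Icc 1 T, (if s t ≤ q t then (1 : ℝ) else 0)
      = (T : ℝ) - ∑ t ∈ Finset.Icc 1 T, (if q t < s t then (1 : ℝ) else 0) := by
    have hpt : ∀ t, (if s t ≤ q t then (1 : ℝ) else 0)
        = 1 - (if q t < s t then (1 : ℝ) else 0) := by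
      intro t
      by_cases h : s t ≤ q t
      · rw [if_pos h, if_neg (not_lt.mpr h)]; ring
      · rw [if_neg h, if_pos (lt_of_not_ge h)]; ring
    simp_rw [hpt]
    rw [Finset.sum_sub_distrib, Finset.sum_const, hcard, nsmul_eq_mul, mul_one]
  have hTpos : (0 : ℝ) < T := by exact_mod_cast hT
  have hmain : (1 / (T : ℝ)) * ∑ t ∈ Finset.Icc 1 T, (if s t ≤ q t then (1 : ℝ) else 0)
        - (1 - α)
      = -((1 / (T : ℝ)) * ∑ t ∈ Finset.Icc 1 T,
          ((if q t < s t then (1 : ℝ) else 0) - α)) := by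
    rw [hcov, Finset.sum_sub_distrib, Finset.sum_const, hcard, nsmul_eq_mul]
    field_simp
    ring
  rw [hmain, abs_neg, abs_mul, abs_of_pos (by positivity : (0:ℝ) < 1 / (T : ℝ)),
    keyid T hT]
  have hbound : |∑ u ∈ Finset.Icc 1 T, Δ u * (q (T + 1) - q u)|
      ≤ (B + M) * ∑ u ∈ Finset.Icc 1 T, |Δ u| := by
    calc |∑ u ∈ Finset.Icc 1 T, Δ u * (q (T + 1) - q u)|
        ≤ ∑ u ∈ Finset.Icc 1 T, |Δ u * (q (T + 1) - q u)| :=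
          Finset.abs_sum_le_sum_abs _ _
      _ = ∑ u ∈ Finset.Icc 1 T, |Δ u| * |q (T + 1) - q u| := by
          simp_rw [abs_mul]
      _ ≤ ∑ u ∈ Finset.Icc 1 T, |Δ u| * (B + M) := by
          apply Finset.sum_le_sum
          intro u hu
          obtain ⟨hu1, huT⟩ := Finset.mem_Icc.mp hu
          apply mul_le_mul_of_nonneg_left _ (abs_nonneg _)
          obtain ⟨l1, u1⟩ := hqb (T + 1) (by omega) le_rfl
          obtain ⟨l2, u2⟩ := hqb u hu1 (by omega)
          rw [abs_le]
          constructor <;> nlinarith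
      _ = (B + M) * ∑ u ∈ Finset.Icc 1 T, |Δ u| := by
          rw [← Finset.sum_mul]; ring
  calc (1 / (T : ℝ)) * |∑ u ∈ Finset.Icc 1 T, Δ u * (q (T + 1) - q u)|
      ≤ (1 / (T : ℝ)) * ((B + M) * ∑ u ∈ Finset.Icc 1 T, |Δ u|) := by
        apply mul_le_mul_of_nonneg_left hbound (by positivity)
    _ = ((B + M) / T) * ∑ u ∈ Finset.Icc 1 T, |Δ u| := by ring
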